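/- Let ρ ∈ L¹(ℝ) be nonnegative, even, non-increasing on (0,∞), with ∫ r²ρ(r) dr < ∞, and let ρ_ε(x) = ε⁻¹ ρ(x/ε). Let -∞ ≤ a < 0 < b ≤ +∞ and φ ∈ H¹((a,b)). Then lim_{ε→0} ε⁻² ∫_a^0 ∫_0^b ρ_ε(x-y) (φ(x) - φ(y))² dx dy = 0. -/

import Mathlib

open MeasureTheory Set Filter
open scoped ENNReal

namespace Stmt15Aux

variable {α : Type*} [MeasurableSpace α] {μ : Measure α}

lemma ofReal_integral_le {f : α → ℝ} (hf : 0 ≤ᵐ[μ] f) :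
    ENNReal.ofReal (∫ x, f x ∂μ) ≤ ∫⁻ x, ENNReal.ofReal (f x) ∂μ := by
  by_cases hfi : Integrable f μ
  · exact le_of_eq (ofReal_integral_eq_lintegral_ofReal hfi hf)
  · rw [integral_undef hfi]; simp

lemma integral_le_toReal {f : α → ℝ} (hf : 0 ≤ᵐ[μ] f) :
    ∫ x, f x ∂μ ≤ (∫⁻ x, ENNReal.ofReal (f x) ∂μ).toReal := by
  by_cases hfi : Integrable f μ
  · rw [← ofReal_integral_eq_lintegral_ofReal hfi hf,
      ENNReal.toReal_ofReal (integral_nonneg_of_ae hf)]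
  · rw [integral_undef hfi]; exact ENNReal.toReal_nonneg

/-- An even function nonincreasing on `(0,∞)` is measurable. -/
lemma measurable_of_even_antitoneOn {ρ : ℝ → ℝ} (hρsymm : ∀ z, ρ (-z) = ρ z)
    (hρmono : ∀ ⦃z w : ℝ⦄, 0 < z → z ≤ w → ρ w ≤ ρ z) : Measurable ρ := by
  apply measurable_of_Ioi
  intro c
  set S : Set ℝ := {z | 0 < z ∧ c < ρ z} with hS
  have hSord : OrdConnected S := by
    constructor
    rintro z1 ⟨hz1, hc1⟩ z2 ⟨hz2, hc2⟩ u ⟨hu1, hu2⟩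
    exact ⟨lt_of_lt_of_le hz1 hu1, lt_of_lt_of_le hc2 (hρmono (lt_of_lt_of_le hz1 hu1) hu2)⟩
  have hSmeas : MeasurableSet S := hSord.measurableSet
  have : ρ ⁻¹' Ioi c = S ∪ (Neg.neg ⁻¹' S) ∪ ({0} ∩ ρ ⁻¹' Ioi c) := by
    ext z
    simp only [mem_union, mem_preimage, mem_Ioi, hS, mem_setOf_eq, mem_inter_iff,
      mem_singleton_iff]
    constructor
    · intro hz
      rcases lt_trichotomy z 0 with h | h | h
      · exact Or.inl (Or.inr ⟨by linarith, by rwa [hρsymm]⟩)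
      · exact Or.inr ⟨h, hz⟩
      · exact Or.inl (Or.inl ⟨h, hz⟩)
    · rintro ((⟨_, h⟩ | ⟨_, h⟩) | ⟨_, h⟩)
      · exact h
      · rwa [hρsymm] at h
      · exact h
  rw [this]
  exact ((hSmeas.union (hSmeas.preimage measurable_neg)).union
    (((Set.countable_singleton 0).mono inter_subset_left).measurableSet))

end Stmt15Aux

open MeasureTheory Set Filter
open scoped ENNReal

namespace Stmt15Aux2

variable {α : Type*} [MeasurableSpace α] {μ : Measure α}

/-- abstract exhaustion lemma: if `A n ∪ B n = U` with `A n` increasing and a.e. exhausting `U`,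
and the integral over `U` is finite, then the integral over `B n` is eventually small. -/
lemma exists_small {g : α → ℝ≥0∞} (hg : AEMeasurable g μ) {A B : ℕ → Set α} {U : Set α}
    (hA : ∀ n, MeasurableSet (A n)) (hB : ∀ n, MeasurableSet (B n))
    (hc : ∀ n, A n ∪ B n = U) (hd : ∀ n, Disjoint (A n) (B n)) (hmono : Monotone A)
    (hae : ∀ᵐ x ∂μ, x ∈ U → ∃ n, x ∈ A n)
    (hfin : ∫⁻ x in U, g x ∂μ ≠ ∞) {ζ : ℝ≥0∞} (hζ : ζ ≠ 0) :
    ∃ n, ∫⁻ x in B n, g x ∂μ < ζ := by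
  by_contra hcon
  push_neg at hcon
  have hUmeas : MeasurableSet U := (hc 0) ▸ (hA 0).union (hB 0)
  have hAU : ∀ n, A n ⊆ U := fun n => (hc n) ▸ subset_union_left
  have key : ∫⁻ x in U, g x ∂μ ≤ ⨆ n, ∫⁻ x in A n, g x ∂μ := by
    have h1 : ∫⁻ x in U, g x ∂μ = ∫⁻ x, U.indicator g x ∂μ := (lintegral_indicator hUmeas g).symm
    rw [h1]
    have h2 : ∫⁻ x, ⨆ n, (A n).indicator g x ∂μ = ⨆ n, ∫⁻ x, (A n).indicator g x ∂μ := by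
      apply lintegral_iSup' (fun n => hg.indicator (hA n))
      filter_upwards with x
      intro m n hmn
      exact indicator_le_indicator_of_subset (hmono hmn) (fun _ => zero_le) x
    calc ∫⁻ x, U.indicator g x ∂μ ≤ ∫⁻ x, ⨆ n, (A n).indicator g x ∂μ := by
          apply lintegral_mono_ae
          filter_upwards [hae] with x hx
          by_cases hxU : x ∈ U
          · obtain ⟨n, hn⟩ := hx hxU
            calc U.indicator g x = g x := indicator_of_mem hxU g
              _ = (A n).indicator g x := (indicator_of_mem hn g).symm
              _ ≤ ⨆ m, (A m).indicator g x := le_iSup (fun m => (A m).indicator g x) n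
          · simp [indicator_of_notMem hxU]
      _ = ⨆ n, ∫⁻ x, (A n).indicator g x ∂μ := h2
      _ = ⨆ n, ∫⁻ x in A n, g x ∂μ := by simp_rw [lintegral_indicator (hA _)]
  have hsum : ∀ n, ∫⁻ x in A n, g x ∂μ + ζ ≤ ∫⁻ x in U, g x ∂μ := by
    intro n
    calc ∫⁻ x in A n, g x ∂μ + ζ ≤ ∫⁻ x in A n, g x ∂μ + ∫⁻ x in B n, g x ∂μ :=
          add_le_add_right (hcon n) _
      _ = ∫⁻ x in A n ∪ B n, g x ∂μ := (lintegral_union (hB n) (hd n)).symm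
      _ = ∫⁻ x in U, g x ∂μ := by rw [hc n]
  have : ∫⁻ x in U, g x ∂μ + ζ ≤ ∫⁻ x in U, g x ∂μ := by
    calc ∫⁻ x in U, g x ∂μ + ζ ≤ (⨆ n, ∫⁻ x in A n, g x ∂μ) + ζ := add_le_add_left key _
      _ = ⨆ n, (∫⁻ x in A n, g x ∂μ + ζ) := ENNReal.iSup_add _
      _ ≤ ∫⁻ x in U, g x ∂μ := iSup_le hsum
  exact absurd this (not_le.mpr (ENNReal.lt_add_right hfin hζ))

/-- scaling: `∫⁻ H (s/ε) ds = ofReal ε * ∫⁻ H`. -/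
lemma lintegral_scale {H : ℝ → ℝ≥0∞} (hH : Measurable H) {ε : ℝ} (hε : 0 < ε) :
    ∫⁻ s : ℝ, H (s / ε) = ENNReal.ofReal ε * ∫⁻ t : ℝ, H t := by
  have hne : (ε : ℝ)⁻¹ ≠ 0 := inv_ne_zero hε.ne'
  have hmap : Measure.map (ε⁻¹ * ·) volume = ENNReal.ofReal |ε⁻¹⁻¹| • volume :=
    Real.map_volume_mul_left hne
  have h1 : ∫⁻ s : ℝ, H (s / ε) = ∫⁻ s : ℝ, H (ε⁻¹ * s) := by
    congr 1; funext s; rw [div_eq_inv_mul]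
  rw [h1, ← lintegral_map hH (measurable_const_mul ε⁻¹), hmap, lintegral_smul_measure,
    inv_inv, abs_of_pos hε, smul_eq_mul]

end Stmt15Aux2

open MeasureTheory Set Filter intervalIntegral
open scoped ENNReal

namespace Stmt15Aux3

/-- Cauchy–Schwarz + FTC bound for an `H¹` function on an open order-connected set. -/
lemma cs_ftc {φ : ℝ → ℝ} {D : Set ℝ} (hDopen : IsOpen D) (hord : OrdConnected D)
    (hφd : DifferentiableOn ℝ φ D)
    (hw2 : MemLp (derivWithin φ D) 2 (volume.restrict D))
    {x y : ℝ} (hxD : x ∈ D) (hyD : y ∈ D) (hxy : x < y) :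
    (φ x - φ y) ^ 2 ≤ (y - x) * ∫ u in Ioc x y, (derivWithin φ D u) ^ 2 := by
  set w := derivWithin φ D with hw
  have hsub : Icc x y ⊆ D := hord.out hxD hyD
  have hsub' : Ioc x y ⊆ D := fun u hu => hsub (Ioc_subset_Icc_self hu)
  -- integrability of w on Icc x y
  have hrestrict : ∀ (s : Set ℝ), MeasurableSet s → s ⊆ D →
      MemLp w 2 (volume.restrict s) := by
    intro s hs hsD
    have := hw2.restrict s
    rwa [Measure.restrict_restrict hs, inter_eq_left.mpr hsD] at this
  have hIcc : MemLp w 2 (volume.restrict (Icc x y)) :=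
    hrestrict _ measurableSet_Icc hsub
  haveI : IsFiniteMeasure (volume.restrict (Icc x y)) :=
    ⟨by rw [Measure.restrict_apply_univ]; exact measure_Icc_lt_top⟩
  have hInt : IntegrableOn w (Icc x y) volume := hIcc.integrable one_le_two
  have hIntInterval : IntervalIntegrable w volume x y := by
    apply IntegrableOn.intervalIntegrable
    rwa [uIcc_of_le hxy.le]
  -- FTC
  have hftc : ∫ u in x..y, w u = φ y - φ x := by
    apply integral_eq_sub_of_hasDerivAt
    · intro u hu
      rw [uIcc_of_le hxy.le] at hu
      have huD : u ∈ D := hsub hu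
      have hdiff : DifferentiableAt ℝ φ u := (hφd u huD).differentiableAt (hDopen.mem_nhds huD)
      have : w u = deriv φ u := by rw [hw, derivWithin_of_isOpen hDopen huD]
      rw [this]
      exact hdiff.hasDerivAt
    · exact hIntInterval
  -- Cauchy-Schwarz on ν := restrict (Ioc x y)
  set ν := volume.restrict (Ioc x y) with hν
  haveI : IsFiniteMeasure ν := ⟨by rw [Measure.restrict_apply_univ]; exact measure_Ioc_lt_top⟩
  have hwν : MemLp w (ENNReal.ofReal 2) ν := by
    rw [(by norm_num : ENNReal.ofReal 2 = 2)]
    exact hrestrict _ measurableSet_Ioc hsub'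
  have h1ν : MemLp (fun _ : ℝ => (1:ℝ)) (ENNReal.ofReal 2) ν := memLp_const 1
  have hpq : (2:ℝ).HolderConjugate 2 := Real.HolderConjugate.two_two
  have hH := MeasureTheory.integral_mul_norm_le_Lp_mul_Lq hpq hwν h1ν
  set A := ∫ u in Ioc x y, (w u) ^ 2 with hA
  have hA0 : 0 ≤ A := integral_nonneg fun u => sq_nonneg _
  have hvol : ∫ a, ‖(1:ℝ)‖ ^ (2:ℝ) ∂ν = y - x := by
    simp only [norm_one, Real.one_rpow]
    rw [MeasureTheory.integral_const, smul_eq_mul, mul_one, hν, Measure.real, Measure.restrict_apply_univ,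
      Real.volume_Ioc, ENNReal.toReal_ofReal (by linarith : (0:ℝ) ≤ y - x)]
  have hw2conv : ∀ u : ℝ, ‖w u‖ ^ (2:ℝ) = (w u) ^ 2 := by
    intro u
    rw [Real.norm_eq_abs, (by norm_num : (2:ℝ) = ((2:ℕ):ℝ)), Real.rpow_natCast, sq_abs]
  have hCS : ∫ a, |w a| ∂ν ≤ A ^ (1/(2:ℝ)) * (y - x) ^ (1/(2:ℝ)) := by
    calc ∫ a, |w a| ∂ν = ∫ a, ‖w a‖ * ‖(1:ℝ)‖ ∂ν := by
          simp [Real.norm_eq_abs]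
      _ ≤ (∫ a, ‖w a‖ ^ (2:ℝ) ∂ν) ^ (1/(2:ℝ)) * (∫ a, ‖(1:ℝ)‖ ^ (2:ℝ) ∂ν) ^ (1/(2:ℝ)) := hH
      _ = A ^ (1/(2:ℝ)) * (y - x) ^ (1/(2:ℝ)) := by
          rw [hvol]
          congr 2
          exact integral_congr_ae (Eventually.of_forall fun u => hw2conv u)
  have habs : |∫ a, w a ∂ν| ≤ A ^ (1/(2:ℝ)) * (y - x) ^ (1/(2:ℝ)) := by
    refine le_trans ?_ hCS
    simpa [Real.norm_eq_abs] using norm_integral_le_integral_norm (μ := ν) w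
  have hkey : (φ y - φ x) ^ 2 ≤ A * (y - x) := by
    have h1 : φ y - φ x = ∫ a, w a ∂ν := by
      rw [← hftc, intervalIntegral.integral_of_le hxy.le]
    rw [h1]
    calc (∫ a, w a ∂ν) ^ 2 = |∫ a, w a ∂ν| ^ 2 := (sq_abs _).symm
      _ ≤ (A ^ (1/(2:ℝ)) * (y - x) ^ (1/(2:ℝ))) ^ 2 := by
          apply pow_le_pow_left₀ (abs_nonneg _) habs
      _ = A * (y - x) := by
          rw [mul_pow, ← Real.rpow_natCast (A ^ (1/(2:ℝ))) 2,
            ← Real.rpow_natCast ((y - x) ^ (1/(2:ℝ))) 2,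
            ← Real.rpow_mul hA0, ← Real.rpow_mul (by linarith : (0:ℝ) ≤ y - x)]
          norm_num
  calc (φ x - φ y) ^ 2 = (φ y - φ x) ^ 2 := by ring
    _ ≤ A * (y - x) := hkey
    _ = (y - x) * A := mul_comm _ _

end Stmt15Aux3

open MeasureTheory Set Filter
open scoped ENNReal

set_option maxHeartbeats 2000000 in
/-- the rescaled cross interaction of two adjacent intervals vanishes. -/
theorem stmt15 (ρ : ℝ → ℝ) (hρnn : ∀ z, 0 ≤ ρ z) (hρsymm : ∀ z, ρ (-z) = ρ z)
    (hρmono : ∀ ⦃z w : ℝ⦄, 0 < z → z ≤ w → ρ w ≤ ρ z)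
    (hρint : Integrable ρ) (hρ2 : Integrable (fun r => r ^ 2 * ρ r))
    (a b : EReal) (ha : a < 0) (hb : 0 < b)
    (D : Set ℝ) (hD : D = {x : ℝ | a < (x : EReal) ∧ (x : EReal) < b})
    (φ : ℝ → ℝ) (hφd : DifferentiableOn ℝ φ D)
    (hφ2 : MemLp φ 2 (volume.restrict D))
    (hφ'2 : MemLp (derivWithin φ D) 2 (volume.restrict D)) :
    Tendsto (fun ε : ℝ =>
        ε⁻¹ ^ 2 * ∫ x in D ∩ Iio 0, ∫ y in D ∩ Ioi 0,
          ε⁻¹ * ρ ((x - y) / ε) * (φ x - φ y) ^ 2)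
      (nhdsWithin 0 (Ioi 0)) (nhds 0) := by
  have hρmeas : Measurable ρ := Stmt15Aux.measurable_of_even_antitoneOn hρsymm hρmono
  set w := derivWithin φ D with hw
  -- basic facts about D
  have hDopen : IsOpen D := by
    have : D = Real.toEReal ⁻¹' (Ioo a b) := by rw [hD]; rfl
    rw [this]
    exact (isOpen_Ioo).preimage continuous_coe_real_ereal
  have hDord : OrdConnected D := by
    rw [hD]
    constructor
    rintro x ⟨hx1, hx2⟩ y ⟨hy1, hy2⟩ u ⟨hu1, hu2⟩
    exact ⟨lt_of_lt_of_le hx1 (EReal.coe_le_coe_iff.mpr hu1),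
      lt_of_le_of_lt (EReal.coe_le_coe_iff.mpr hu2) hy2⟩
  have hDmeas : MeasurableSet D := hDopen.measurableSet
  have hS₁meas : MeasurableSet (D ∩ Iio 0) := hDmeas.inter measurableSet_Iio
  have hS₂meas : MeasurableSet (D ∩ Ioi 0) := hDmeas.inter measurableSet_Ioi
  -- constants
  set Q : ℝ → ℝ≥0∞ := fun t => ENNReal.ofReal (t ^ 2 * ρ t) with hQ
  have hQmeas : Measurable Q := ((measurable_id.pow_const 2).mul hρmeas).ennreal_ofReal
  set M := ∫⁻ t, Q t with hMdef
  have hMfin : M ≠ ∞ := hρ2.lintegral_lt_top.ne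
  set ΦE : ℝ → ℝ≥0∞ := fun u => ENNReal.ofReal (2 * φ u ^ 2) with hΦE
  have hφae : AEMeasurable φ (volume.restrict D) := hφ2.aestronglyMeasurable.aemeasurable
  have hΦae : AEMeasurable ΦE (volume.restrict D) :=
    ((hφae.pow_const 2).const_mul 2).ennreal_ofReal
  set NΦ := ∫⁻ u in D, ΦE u with hNΦdef
  have hNfin : NΦ ≠ ∞ := by
    have hint : Integrable (fun u => 2 * φ u ^ 2) (volume.restrict D) :=
      (hφ2.integrable_sq).const_mul 2
    exact hint.lintegral_lt_top.ne
  have hwae : AEMeasurable w (volume.restrict D) := hφ'2.aestronglyMeasurable.aemeasurable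
  have hw2int : Integrable (fun u => w u ^ 2) (volume.restrict D) := hφ'2.integrable_sq
  rw [Metric.tendsto_nhdsWithin_nhds]
  intro η hη
  -- choose δ
  have hζ₁pos : (0:ℝ) < η / (2 * (M.toReal + 1)) := by positivity
  set ζ₁ : ℝ≥0∞ := ENNReal.ofReal (η / (2 * (M.toReal + 1))) with hζ₁
  obtain ⟨n₁, hWsmall⟩ := Stmt15Aux2.exists_small (μ := volume.restrict D)
      (g := fun u => ENNReal.ofReal (w u ^ 2))
      ((hwae.pow_const 2).ennreal_ofReal) (ζ := ζ₁)
      (A := fun n => Ioo (-1 : ℝ) 1 \ Ioo (-(1 / (n + 1 : ℝ))) (1 / (n + 1 : ℝ)))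
      (B := fun n => Ioo (-(1 / (n + 1 : ℝ))) (1 / (n + 1 : ℝ)))
      (U := Ioo (-1 : ℝ) 1)
      (fun n => measurableSet_Ioo.diff measurableSet_Ioo)
      (fun n => measurableSet_Ioo)
      (fun n => by
        apply diff_union_of_subset
        apply Ioo_subset_Ioo
        · have : (0:ℝ) < 1 / (n + 1 : ℝ) := by positivity
          have h2 : 1 / (n + 1 : ℝ) ≤ 1 := by
            rw [div_le_one (by positivity)]; linarith [Nat.cast_nonneg (α := ℝ) n]
          linarith
        · rw [div_le_one (by positivity)]; linarith [Nat.cast_nonneg (α := ℝ) n])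
      (fun n => disjoint_sdiff_left)
      (fun m n hmn => by
        apply diff_subset_diff_right
        apply Ioo_subset_Ioo
        · have : 1 / (n + 1 : ℝ) ≤ 1 / (m + 1 : ℝ) := by
            apply div_le_div_of_nonneg_left (by norm_num) (by positivity)
            exact_mod_cast by exact_mod_cast add_le_add_left (Nat.cast_le.mpr hmn) 1
          linarith
        · apply div_le_div_of_nonneg_left (by norm_num) (by positivity)
          exact_mod_cast add_le_add_left (Nat.cast_le.mpr hmn) 1)
      (by
        have h0 : ∀ᵐ u : ℝ ∂(volume.restrict D), u ≠ 0 := by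
          apply ae_restrict_of_ae
          rw [ae_iff]
          have : {u : ℝ | ¬u ≠ 0} = {0} := by ext u; simp
          rw [this]
          exact measure_singleton 0
        filter_upwards [h0] with u hu huU
        obtain ⟨n, hn⟩ := exists_nat_gt (1 / |u|)
        have habs : 0 < |u| := abs_pos.mpr hu
        refine ⟨n, huU, ?_⟩
        intro hmem
        have h1 : |u| < 1 / (n + 1 : ℝ) := abs_lt.mpr ⟨hmem.1, hmem.2⟩
        have h2 : 1 / (n + 1 : ℝ) < |u| := by
          rw [div_lt_iff₀ (by positivity)]
          rw [div_lt_iff₀ habs] at hn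
          nlinarith
        linarith)
      (by
        refine ne_top_of_le_ne_top hw2int.lintegral_lt_top.ne ?_
        exact setLIntegral_le_lintegral _ _)
      (by
        rw [hζ₁]
        simp only [ne_eq, ENNReal.ofReal_eq_zero, not_le]
        exact hζ₁pos)
  set δ : ℝ := 1 / (n₁ + 1 : ℝ) with hδdef
  have hδpos : 0 < δ := by positivity
  set Wδ := ∫⁻ u in Ioo (-δ) δ, ENNReal.ofReal (w u ^ 2) ∂(volume.restrict D) with hWδdef
  have hWδ : Wδ < ζ₁ := hWsmall
  have hWδtop : Wδ ≠ ∞ := (hWδ.trans_le le_top).ne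
  -- choose R
  have hζ₂pos : (0:ℝ) < η * δ ^ 2 / (4 * (NΦ.toReal + 1)) := by positivity
  set ζ₂ : ℝ≥0∞ := ENNReal.ofReal (η * δ ^ 2 / (4 * (NΦ.toReal + 1))) with hζ₂
  obtain ⟨n₂, hTsmall⟩ := Stmt15Aux2.exists_small (μ := (volume : Measure ℝ))
      (g := Q) hQmeas.aemeasurable (ζ := ζ₂)
      (A := fun n => Ioc (0:ℝ) (n:ℝ)) (B := fun n => Ioi (n:ℝ)) (U := Ioi (0:ℝ))
      (fun n => measurableSet_Ioc) (fun n => measurableSet_Ioi)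
      (fun n => Ioc_union_Ioi_eq_Ioi (Nat.cast_nonneg n))
      (fun n => Ioc_disjoint_Ioi le_rfl)
      (fun m n hmn => Ioc_subset_Ioc_right (Nat.cast_le.mpr hmn))
      (by
        filter_upwards with u hu
        obtain ⟨n, hn⟩ := exists_nat_ge u
        exact ⟨n, hu, hn⟩)
      (by
        refine ne_top_of_le_ne_top hMfin ?_
        exact setLIntegral_le_lintegral _ _)
      (by
        rw [hζ₂]
        simp only [ne_eq, ENNReal.ofReal_eq_zero, not_le]
        exact hζ₂pos)
  set R : ℝ := (n₂ : ℝ) + 1 with hRdef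
  have hRpos : (0:ℝ) < R := by positivity
  have hTR : ∫⁻ t in Ioi R, Q t < ζ₂ := by
    refine lt_of_le_of_lt ?_ hTsmall
    exact lintegral_mono' (Measure.restrict_mono (Ioi_subset_Ioi (by linarith)) le_rfl) le_rfl
  refine ⟨δ / R, by positivity, ?_⟩
  intro ε hε hdist
  have hε0 : (0:ℝ) < ε := hε
  rw [Real.dist_eq, sub_zero, abs_of_pos hε0] at hdist
  have hδε : R < δ / ε := by
    rw [lt_div_iff₀ hε0]
    calc R * ε = ε * R := mul_comm _ _
      _ < δ / R * R := by
          apply mul_lt_mul_of_pos_right hdist hRpos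
      _ = δ := by field_simp
  set S₁ : Set ℝ := D ∩ Iio 0 with hS₁
  set S₂ : Set ℝ := D ∩ Ioi 0 with hS₂
  set P : ℝ → ℝ≥0∞ := fun z => ENNReal.ofReal (ρ z) with hP
  have hPmeas : Measurable P := hρmeas.ennreal_ofReal
  set ψ : ℝ → ℝ≥0∞ := fun s => (Ioi δ).indicator (fun s' => P (s' / ε)) s with hψ
  have hψmeas : Measurable ψ :=
    (hPmeas.comp (measurable_id.div_const ε)).indicator measurableSet_Ioi
  set f : ℝ → ℝ → ℝ := fun x y => ε⁻¹ * ρ ((x - y) / ε) * (φ x - φ y) ^ 2 with hf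
  have hfnn : ∀ x y, 0 ≤ f x y := fun x y =>
    mul_nonneg (mul_nonneg (inv_nonneg.mpr hε0.le) (hρnn _)) (sq_nonneg _)
  set L := ∫⁻ x in S₁, ∫⁻ y in S₂, ENNReal.ofReal (f x y) with hLdef
  set Ω : ℝ := ∫ u in Ioo (-δ) δ, w u ^ 2 ∂(volume.restrict D) with hΩdef
  have hΩW : ENNReal.ofReal Ω ≤ Wδ :=
    Stmt15Aux.ofReal_integral_le (Eventually.of_forall fun u => sq_nonneg _)
  have hptwise : ∀ x ∈ S₁, ∀ y ∈ S₂, ENNReal.ofReal (f x y) ≤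
      ENNReal.ofReal ε⁻¹ * (P ((y - x) / ε) * ENNReal.ofReal (y - x) * Wδ +
        (ψ (y - x) * ΦE x + ψ (y - x) * ΦE y)) := by
    rintro x ⟨hxD, hx0⟩ y ⟨hyD, hy0⟩
    simp only [mem_Iio] at hx0
    simp only [mem_Ioi] at hy0
    have hxy : x < y := hx0.trans hy0
    have hfeq : ENNReal.ofReal (f x y) =
        ENNReal.ofReal ε⁻¹ * (P ((y - x) / ε) * ENNReal.ofReal ((φ x - φ y) ^ 2)) := by
      have h1 : f x y = ε⁻¹ * ρ ((y - x) / ε) * (φ x - φ y) ^ 2 := by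
        rw [hf]; dsimp only; rw [show (x - y) / ε = -((y - x) / ε) by ring, hρsymm]
      rw [h1, ENNReal.ofReal_mul (mul_nonneg (inv_nonneg.mpr hε0.le) (hρnn _)),
        ENNReal.ofReal_mul (inv_nonneg.mpr hε0.le), mul_assoc]
    rw [hfeq]
    apply mul_le_mul_right
    by_cases hcase : y - x ≤ δ
    · have hIocD : Ioc x y ⊆ D := fun u hu => (hDord.out hxD hyD) (Ioc_subset_Icc_self hu)
      have hIocsub : Ioc x y ⊆ Ioo (-δ) δ := by
        intro u hu
        have h1 := hu.1
        have h2 := hu.2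
        constructor <;> [linarith; linarith]
      have hcs : (φ x - φ y) ^ 2 ≤ (y - x) * Ω := by
        have h1 := Stmt15Aux3.cs_ftc hDopen hDord hφd hφ'2 hxD hyD hxy
        have h2 : ∫ u in Ioc x y, w u ^ 2 = ∫ u in Ioc x y, w u ^ 2 ∂(volume.restrict D) := by
          rw [Measure.restrict_restrict measurableSet_Ioc, inter_eq_left.mpr hIocD]
        have h3 : ∫ u in Ioc x y, w u ^ 2 ∂(volume.restrict D) ≤ Ω :=
          setIntegral_mono_set hw2int.integrableOn
            (Eventually.of_forall fun u => sq_nonneg _) (HasSubset.Subset.eventuallyLE hIocsub)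
        calc (φ x - φ y) ^ 2 ≤ (y - x) * ∫ u in Ioc x y, w u ^ 2 := h1
          _ = (y - x) * ∫ u in Ioc x y, w u ^ 2 ∂(volume.restrict D) := by rw [h2]
          _ ≤ (y - x) * Ω := mul_le_mul_of_nonneg_left h3 (by linarith)
      calc P ((y - x) / ε) * ENNReal.ofReal ((φ x - φ y) ^ 2)
          ≤ P ((y - x) / ε) * (ENNReal.ofReal (y - x) * Wδ) := by
            apply mul_le_mul_right
            calc ENNReal.ofReal ((φ x - φ y) ^ 2)
                ≤ ENNReal.ofReal ((y - x) * Ω) := ENNReal.ofReal_le_ofReal hcs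
              _ = ENNReal.ofReal (y - x) * ENNReal.ofReal Ω :=
                  ENNReal.ofReal_mul (by linarith)
              _ ≤ ENNReal.ofReal (y - x) * Wδ := mul_le_mul_right hΩW _
        _ = P ((y - x) / ε) * ENNReal.ofReal (y - x) * Wδ := (mul_assoc _ _ _).symm
        _ ≤ _ := le_self_add
    · push_neg at hcase
      have h2 : (φ x - φ y) ^ 2 ≤ 2 * φ x ^ 2 + 2 * φ y ^ 2 := by
        nlinarith [sq_nonneg (φ x + φ y)]
      have hψval : ψ (y - x) = P ((y - x) / ε) := indicator_of_mem (mem_Ioi.mpr hcase) _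
      calc P ((y - x) / ε) * ENNReal.ofReal ((φ x - φ y) ^ 2)
          ≤ P ((y - x) / ε) * (ΦE x + ΦE y) := by
            apply mul_le_mul_right
            calc ENNReal.ofReal ((φ x - φ y) ^ 2)
                ≤ ENNReal.ofReal (2 * φ x ^ 2 + 2 * φ y ^ 2) := ENNReal.ofReal_le_ofReal h2
              _ ≤ ΦE x + ΦE y := ENNReal.ofReal_add_le
        _ = ψ (y - x) * ΦE x + ψ (y - x) * ΦE y := by rw [hψval, mul_add]
        _ ≤ _ := le_add_self
  -- restriction measurability facts
  have hrS₂ : volume.restrict S₂ = (volume.restrict D).restrict (Ioi 0) := by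
    rw [hS₂, inter_comm]
    exact (Measure.restrict_restrict measurableSet_Ioi).symm
  have hrS₁ : volume.restrict S₁ = (volume.restrict D).restrict (Iio 0) := by
    rw [hS₁, inter_comm]
    exact (Measure.restrict_restrict measurableSet_Iio).symm
  have hΦS₂ : AEMeasurable ΦE (volume.restrict S₂) := by rw [hrS₂]; exact hΦae.restrict
  have hΦS₁ : AEMeasurable ΦE (volume.restrict S₁) := by rw [hrS₁]; exact hΦae.restrict
  -- the three pieces
  set I1 := ∫⁻ x in S₁, ∫⁻ y in S₂, P ((y - x) / ε) * ENNReal.ofReal (y - x) * Wδ with hI1def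
  set I2 := ∫⁻ x in S₁, (∫⁻ y in S₂, ψ (y - x)) * ΦE x with hI2def
  set I3 := ∫⁻ x in S₁, ∫⁻ y in S₂, ψ (y - x) * ΦE y with hI3def
  have hjoint1 : Measurable (fun p : ℝ × ℝ =>
      P ((p.2 - p.1) / ε) * ENNReal.ofReal (p.2 - p.1) * Wδ) :=
    ((hPmeas.comp ((measurable_snd.sub measurable_fst).div_const ε)).mul
      ((measurable_snd.sub measurable_fst).ennreal_ofReal)).mul_const _
  have hjointψ : Measurable (fun p : ℝ × ℝ => ψ (p.2 - p.1)) :=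
    hψmeas.comp (measurable_snd.sub measurable_fst)
  have hL1 : L ≤ ENNReal.ofReal ε⁻¹ * (I1 + (I2 + I3)) := by
    have hstepa : L ≤ ∫⁻ x in S₁, ∫⁻ y in S₂,
        ENNReal.ofReal ε⁻¹ * (P ((y - x) / ε) * ENNReal.ofReal (y - x) * Wδ +
          (ψ (y - x) * ΦE x + ψ (y - x) * ΦE y)) := by
      rw [hLdef]
      apply lintegral_mono_ae
      filter_upwards [ae_restrict_mem hS₁meas] with x hx
      apply lintegral_mono_ae
      filter_upwards [ae_restrict_mem hS₂meas] with y hy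
      exact hptwise x hx y hy
    refine hstepa.trans (le_of_eq ?_)
    have hb : ∀ x : ℝ, ∫⁻ y in S₂,
        ENNReal.ofReal ε⁻¹ * (P ((y - x) / ε) * ENNReal.ofReal (y - x) * Wδ +
          (ψ (y - x) * ΦE x + ψ (y - x) * ΦE y)) =
        ENNReal.ofReal ε⁻¹ * ∫⁻ y in S₂,
          (P ((y - x) / ε) * ENNReal.ofReal (y - x) * Wδ +
          (ψ (y - x) * ΦE x + ψ (y - x) * ΦE y)) := fun x =>
      lintegral_const_mul' _ _ ENNReal.ofReal_ne_top
    simp_rw [hb]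
    rw [lintegral_const_mul' _ _ ENNReal.ofReal_ne_top]
    congr 1
    have hsplit : ∀ x : ℝ, ∫⁻ y in S₂,
        (P ((y - x) / ε) * ENNReal.ofReal (y - x) * Wδ +
          (ψ (y - x) * ΦE x + ψ (y - x) * ΦE y)) =
        (∫⁻ y in S₂, P ((y - x) / ε) * ENNReal.ofReal (y - x) * Wδ) +
          ((∫⁻ y in S₂, ψ (y - x)) * ΦE x + ∫⁻ y in S₂, ψ (y - x) * ΦE y) := by
      intro x
      have hg1ae : AEMeasurable (fun y : ℝ =>
          P ((y - x) / ε) * ENNReal.ofReal (y - x) * Wδ) (volume.restrict S₂) :=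
        (((hPmeas.comp ((measurable_id.sub_const x).div_const ε)).mul
          ((measurable_id.sub_const x).ennreal_ofReal)).mul_const _).aemeasurable
      have hg2ae : AEMeasurable (fun y : ℝ => ψ (y - x) * ΦE x) (volume.restrict S₂) :=
        ((hψmeas.comp (measurable_id.sub_const x)).mul_const _).aemeasurable
      rw [lintegral_add_left' hg1ae, lintegral_add_left' hg2ae,
        lintegral_mul_const' _ _ ENNReal.ofReal_ne_top]
    simp_rw [hsplit]
    have hI1meas : Measurable (fun x : ℝ => ∫⁻ y in S₂,
        P ((y - x) / ε) * ENNReal.ofReal (y - x) * Wδ) := hjoint1.lintegral_prod_right'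
    have hI2ae : AEMeasurable (fun x : ℝ => (∫⁻ y in S₂, ψ (y - x)) * ΦE x)
        (volume.restrict S₁) :=
      (hjointψ.lintegral_prod_right').aemeasurable.mul hΦS₁
    rw [lintegral_add_left' hI1meas.aemeasurable, lintegral_add_left' hI2ae]
  -- the translated tail integral
  set Ψ := ∫⁻ s, ψ s with hΨdef
  have hΨy : ∀ x : ℝ, ∫⁻ y in S₂, ψ (y - x) ≤ Ψ := by
    intro x
    calc ∫⁻ y in S₂, ψ (y - x) ≤ ∫⁻ y, ψ (y - x) :=
          lintegral_mono' Measure.restrict_le_self le_rfl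
      _ = Ψ := by
          simp_rw [sub_eq_add_neg]
          exact (measurePreserving_add_right volume (-x)).lintegral_comp hψmeas
  have hΨx : ∀ y : ℝ, ∫⁻ x in S₁, ψ (y - x) ≤ Ψ := by
    intro y
    calc ∫⁻ x in S₁, ψ (y - x) ≤ ∫⁻ x, ψ (y - x) :=
          lintegral_mono' Measure.restrict_le_self le_rfl
      _ = Ψ := (Measure.measurePreserving_sub_left volume y).lintegral_comp hψmeas
  set Tv := ∫⁻ t in Ioi (δ / ε), Q t with hTvdef
  have hTvM : Tv ≤ M := setLIntegral_le_lintegral _ _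
  have hTvζ : Tv ≤ ζ₂ := by
    refine le_trans ?_ hTR.le
    exact lintegral_mono' (Measure.restrict_mono (Ioi_subset_Ioi hδε.le) le_rfl) le_rfl
  have hΨbound : Ψ ≤ ENNReal.ofReal (ε ^ 2 / δ ^ 2) * (ENNReal.ofReal ε * Tv) := by
    have h1 : Ψ = ∫⁻ s in Ioi δ, P (s / ε) := by
      rw [hΨdef, hψ, lintegral_indicator measurableSet_Ioi]
    have h2 : ∫⁻ s in Ioi δ, P (s / ε) ≤
        ∫⁻ s in Ioi δ, ENNReal.ofReal (ε ^ 2 / δ ^ 2) * Q (s / ε) := by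
      apply lintegral_mono_ae
      filter_upwards [ae_restrict_mem measurableSet_Ioi] with s hs
      have hsδ : δ < s := hs
      have hkey : ρ (s / ε) ≤ ε ^ 2 / δ ^ 2 * ((s / ε) ^ 2 * ρ (s / ε)) := by
        have h3 : ε ^ 2 / δ ^ 2 * ((s / ε) ^ 2) = (s / δ) ^ 2 := by
          field_simp
        have h4 : (1 : ℝ) ≤ (s / δ) ^ 2 := by
          have h5 : (1 : ℝ) ≤ s / δ := by
            rw [le_div_iff₀ hδpos]; linarith
          nlinarith
        calc ρ (s / ε) = 1 * ρ (s / ε) := (one_mul _).symm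
          _ ≤ (s / δ) ^ 2 * ρ (s / ε) := mul_le_mul_of_nonneg_right h4 (hρnn _)
          _ = ε ^ 2 / δ ^ 2 * ((s / ε) ^ 2 * ρ (s / ε)) := by rw [← h3]; ring
      calc P (s / ε) ≤ ENNReal.ofReal (ε ^ 2 / δ ^ 2 * ((s / ε) ^ 2 * ρ (s / ε))) :=
            ENNReal.ofReal_le_ofReal hkey
        _ = ENNReal.ofReal (ε ^ 2 / δ ^ 2) * Q (s / ε) :=
            ENNReal.ofReal_mul (by positivity)
    have h5 : ∫⁻ s in Ioi δ, ENNReal.ofReal (ε ^ 2 / δ ^ 2) * Q (s / ε) =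
        ENNReal.ofReal (ε ^ 2 / δ ^ 2) * ∫⁻ s in Ioi δ, Q (s / ε) :=
      lintegral_const_mul' _ _ ENNReal.ofReal_ne_top
    have h6 : ∫⁻ s in Ioi δ, Q (s / ε) = ENNReal.ofReal ε * Tv := by
      have h7 : (fun s : ℝ => (Ioi δ).indicator (fun s' => Q (s' / ε)) s) =
          fun s : ℝ => (Ioi (δ / ε)).indicator Q (s / ε) := by
        funext s
        by_cases hs : δ < s
        · rw [indicator_of_mem (mem_Ioi.mpr hs), indicator_of_mem]
          exact mem_Ioi.mpr (by gcongr)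
        · push_neg at hs
          rw [indicator_of_notMem (by simpa using hs), indicator_of_notMem]
          simp only [mem_Ioi, not_lt]
          gcongr
      rw [← lintegral_indicator measurableSet_Ioi, h7,
        Stmt15Aux2.lintegral_scale (hQmeas.indicator measurableSet_Ioi) hε0,
        lintegral_indicator measurableSet_Ioi]
    rw [h1]
    calc ∫⁻ s in Ioi δ, P (s / ε) ≤ ∫⁻ s in Ioi δ, ENNReal.ofReal (ε ^ 2 / δ ^ 2) * Q (s / ε) := h2
      _ = ENNReal.ofReal (ε ^ 2 / δ ^ 2) * ∫⁻ s in Ioi δ, Q (s / ε) := h5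
      _ = ENNReal.ofReal (ε ^ 2 / δ ^ 2) * (ENNReal.ofReal ε * Tv) := by rw [h6]
  have hΨfin : Ψ ≠ ∞ := by
    refine ne_top_of_le_ne_top ?_ hΨbound
    exact ENNReal.mul_ne_top ENNReal.ofReal_ne_top
      (ENNReal.mul_ne_top ENNReal.ofReal_ne_top (ne_top_of_le_ne_top hMfin hTvM))
  -- bounds on I2 and I3
  have hS₁le : volume.restrict S₁ ≤ volume.restrict D :=
    Measure.restrict_mono inter_subset_left le_rfl
  have hS₂le : volume.restrict S₂ ≤ volume.restrict D :=
    Measure.restrict_mono inter_subset_left le_rfl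
  have hI2b : I2 ≤ Ψ * NΦ := by
    calc I2 ≤ ∫⁻ x in S₁, Ψ * ΦE x := by
          rw [hI2def]
          exact lintegral_mono fun x => mul_le_mul_left (hΨy x) _
      _ = Ψ * ∫⁻ x in S₁, ΦE x := lintegral_const_mul' _ _ hΨfin
      _ ≤ Ψ * NΦ := mul_le_mul_right (lintegral_mono' hS₁le le_rfl) _
  have hI3b : I3 ≤ Ψ * NΦ := by
    have hqmp : Measure.QuasiMeasurePreserving (Prod.snd : ℝ × ℝ → ℝ)
        ((volume.restrict S₁).prod (volume.restrict S₂)) (volume.restrict S₂) := by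
      refine ⟨measurable_snd, ?_⟩
      rw [Measure.map_snd_prod]
      intro s hs
      simp [hs]
    have huncurry : AEMeasurable (Function.uncurry fun x y => ψ (y - x) * ΦE y)
        ((volume.restrict S₁).prod (volume.restrict S₂)) := by
      have h1 : AEMeasurable (fun p : ℝ × ℝ => ΦE p.2)
          ((volume.restrict S₁).prod (volume.restrict S₂)) :=
        hΦS₂.comp_quasiMeasurePreserving hqmp
      exact hjointψ.aemeasurable.mul h1
    have hswap : I3 = ∫⁻ y in S₂, ∫⁻ x in S₁, ψ (y - x) * ΦE y := by
      rw [hI3def]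
      exact lintegral_lintegral_swap huncurry
    rw [hswap]
    calc ∫⁻ y in S₂, ∫⁻ x in S₁, ψ (y - x) * ΦE y
        = ∫⁻ y in S₂, (∫⁻ x in S₁, ψ (y - x)) * ΦE y := by
          apply lintegral_congr
          intro y
          exact lintegral_mul_const' _ _ ENNReal.ofReal_ne_top
      _ ≤ ∫⁻ y in S₂, Ψ * ΦE y := lintegral_mono fun y => mul_le_mul_left (hΨx y) _
      _ = Ψ * ∫⁻ y in S₂, ΦE y := lintegral_const_mul' _ _ hΨfin
      _ ≤ Ψ * NΦ := mul_le_mul_right (lintegral_mono' hS₂le le_rfl) _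
  -- bound on I1
  have hI1b : I1 ≤ Wδ * (ENNReal.ofReal (ε ^ 2) * (ENNReal.ofReal ε * M)) := by
    set G : ℝ → ℝ → ℝ≥0∞ := fun x y => P ((y - x) / ε) * ENNReal.ofReal (y - x) * Wδ with hG
    set k : ℝ → ℝ → ℝ≥0∞ := fun x s =>
      if -x < s then P (s / ε) * ENNReal.ofReal s * Wδ else 0 with hk
    have hstep0 : I1 ≤ ∫⁻ x in Iio (0:ℝ), ∫⁻ y in Ioi (0:ℝ), G x y := by
      rw [hI1def]
      calc ∫⁻ x in S₁, ∫⁻ y in S₂, G x y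
          ≤ ∫⁻ x in S₁, ∫⁻ y in Ioi (0:ℝ), G x y :=
            lintegral_mono fun x =>
              lintegral_mono' (Measure.restrict_mono inter_subset_right le_rfl) le_rfl
        _ ≤ ∫⁻ x in Iio (0:ℝ), ∫⁻ y in Ioi (0:ℝ), G x y :=
            lintegral_mono' (Measure.restrict_mono inter_subset_right le_rfl) le_rfl
    have hstep1 : ∀ x : ℝ, ∫⁻ y in Ioi (0:ℝ), G x y = ∫⁻ s, k x s := by
      intro x
      have hindmeas : Measurable ((Ioi (0:ℝ)).indicator (G x)) := by
        apply Measurable.indicator ?_ measurableSet_Ioi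
        exact ((hPmeas.comp ((measurable_id.sub_const x).div_const ε)).mul
          ((measurable_id.sub_const x).ennreal_ofReal)).mul_const _
      have hcomp : ∀ s : ℝ, (Ioi (0:ℝ)).indicator (G x) (s + x) = k x s := by
        intro s
        by_cases h : -x < s
        · rw [indicator_of_mem (mem_Ioi.mpr (by linarith : (0:ℝ) < s + x)), hk]
          dsimp only
          rw [if_pos h, hG]
          dsimp only
          rw [add_sub_cancel_right]
        · push_neg at h
          rw [indicator_of_notMem (by simp only [mem_Ioi, not_lt]; linarith), hk]
          dsimp only
          rw [if_neg (by simpa using h)]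
      rw [← lintegral_indicator measurableSet_Ioi]
      calc ∫⁻ y, (Ioi (0:ℝ)).indicator (G x) y
          = ∫⁻ s, (Ioi (0:ℝ)).indicator (G x) (s + x) :=
            ((measurePreserving_add_right volume x).lintegral_comp hindmeas).symm
        _ = ∫⁻ s, k x s := by simp_rw [hcomp]
    have hkuncurry : Measurable (Function.uncurry k) := by
      have hset : MeasurableSet {p : ℝ × ℝ | -p.1 < p.2} :=
        measurableSet_lt measurable_fst.neg measurable_snd
      have : Function.uncurry k = fun p : ℝ × ℝ =>
          if -p.1 < p.2 then P (p.2 / ε) * ENNReal.ofReal p.2 * Wδ else 0 := rfl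
      rw [this]
      exact Measurable.ite hset
        (((hPmeas.comp (measurable_snd.div_const ε)).mul
          measurable_snd.ennreal_ofReal).mul_const _) measurable_const
    have hstep3 : ∀ s : ℝ, ∫⁻ x in Iio (0:ℝ), k x s =
        P (s / ε) * ENNReal.ofReal s * Wδ * ENNReal.ofReal s := by
      intro s
      have h1 : (fun x => k x s) =
          (Ioi (-s)).indicator (fun _ => P (s / ε) * ENNReal.ofReal s * Wδ) := by
        funext x
        rw [hk]
        dsimp only
        by_cases h : -x < s
        · rw [if_pos h, indicator_of_mem (mem_Ioi.mpr (by linarith))]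
        · rw [if_neg h, indicator_of_notMem (by simp only [mem_Ioi, not_lt]; linarith)]
      rw [h1, lintegral_indicator measurableSet_Ioi, setLIntegral_const,
        Measure.restrict_apply measurableSet_Ioi, Ioi_inter_Iio, Real.volume_Ioo]
      congr 1
      ring_nf
    have hstep4 : ∫⁻ s, P (s / ε) * ENNReal.ofReal s * Wδ * ENNReal.ofReal s ≤
        ∫⁻ s, Wδ * (ENNReal.ofReal (ε ^ 2) * Q (s / ε)) := by
      apply lintegral_mono
      intro s
      by_cases hs : 0 < s
      · apply le_of_eq
        calc P (s / ε) * ENNReal.ofReal s * Wδ * ENNReal.ofReal s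
            = Wδ * (P (s / ε) * ENNReal.ofReal s * ENNReal.ofReal s) := by ring
          _ = Wδ * ENNReal.ofReal (ρ (s / ε) * s * s) := by
              rw [hP]
              dsimp only
              rw [← ENNReal.ofReal_mul (hρnn _),
                ← ENNReal.ofReal_mul (mul_nonneg (hρnn _) hs.le)]
          _ = Wδ * (ENNReal.ofReal (ε ^ 2) * Q (s / ε)) := by
              rw [hQ]
              dsimp only
              rw [← ENNReal.ofReal_mul (by positivity : (0:ℝ) ≤ ε ^ 2)]
              congr 2
              field_simp
      · push_neg at hs
        have h0 : ENNReal.ofReal s = 0 := ENNReal.ofReal_eq_zero.mpr hs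
        show P (s / ε) * ENNReal.ofReal s * Wδ * ENNReal.ofReal s ≤
          Wδ * (ENNReal.ofReal (ε ^ 2) * Q (s / ε))
        rw [h0, mul_zero]
        exact zero_le
    have hstep5 : ∫⁻ s, Wδ * (ENNReal.ofReal (ε ^ 2) * Q (s / ε)) =
        Wδ * (ENNReal.ofReal (ε ^ 2) * (ENNReal.ofReal ε * M)) := by
      rw [lintegral_const_mul' Wδ _ hWδtop]
      congr 1
      rw [lintegral_const_mul' _ _ ENNReal.ofReal_ne_top]
      congr 1
      exact Stmt15Aux2.lintegral_scale hQmeas hε0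
    calc I1 ≤ ∫⁻ x in Iio (0:ℝ), ∫⁻ y in Ioi (0:ℝ), G x y := hstep0
      _ = ∫⁻ x in Iio (0:ℝ), ∫⁻ s, k x s := lintegral_congr hstep1
      _ = ∫⁻ s, ∫⁻ x in Iio (0:ℝ), k x s := lintegral_lintegral_swap hkuncurry.aemeasurable
      _ = ∫⁻ s, P (s / ε) * ENNReal.ofReal s * Wδ * ENNReal.ofReal s :=
          lintegral_congr hstep3
      _ ≤ ∫⁻ s, Wδ * (ENNReal.ofReal (ε ^ 2) * Q (s / ε)) := hstep4
      _ = Wδ * (ENNReal.ofReal (ε ^ 2) * (ENNReal.ofReal ε * M)) := hstep5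
  -- combine into the master bound
  set c₂ := ENNReal.ofReal (ε⁻¹ ^ 2) with hc₂
  set c₁ := ENNReal.ofReal ε⁻¹ with hc₁
  have hΨζ : Ψ ≤ ENNReal.ofReal (ε ^ 2 / δ ^ 2) * (ENNReal.ofReal ε * ζ₂) :=
    hΨbound.trans (mul_le_mul_right (mul_le_mul_right hTvζ _) _)
  have hcoef1 : c₂ * c₁ * (ENNReal.ofReal (ε ^ 2) * ENNReal.ofReal ε) = 1 := by
    rw [hc₂, hc₁, ← ENNReal.ofReal_mul (by positivity), ← ENNReal.ofReal_mul (by positivity),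
      ← ENNReal.ofReal_mul (by positivity),
      show ε⁻¹ ^ 2 * ε⁻¹ * (ε ^ 2 * ε) = 1 by field_simp]
    exact ENNReal.ofReal_one
  have hcoef2 : c₂ * c₁ * (ENNReal.ofReal (ε ^ 2 / δ ^ 2) * ENNReal.ofReal ε) =
      ENNReal.ofReal ((δ ^ 2)⁻¹) := by
    rw [hc₂, hc₁, ← ENNReal.ofReal_mul (by positivity), ← ENNReal.ofReal_mul (by positivity),
      ← ENNReal.ofReal_mul (by positivity)]
    congr 1
    field_simp
  set X := Wδ * M + ENNReal.ofReal ((δ ^ 2)⁻¹) * (2 * (NΦ * ζ₂)) with hX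
  have hmaster : c₂ * L ≤ X := by
    calc c₂ * L ≤ c₂ * (c₁ * (I1 + (I2 + I3))) := mul_le_mul_right hL1 _
      _ ≤ c₂ * (c₁ * (Wδ * (ENNReal.ofReal (ε ^ 2) * (ENNReal.ofReal ε * M)) +
            ((ENNReal.ofReal (ε ^ 2 / δ ^ 2) * (ENNReal.ofReal ε * ζ₂)) * NΦ +
             (ENNReal.ofReal (ε ^ 2 / δ ^ 2) * (ENNReal.ofReal ε * ζ₂)) * NΦ))) := by
          gcongr
          · exact hI2b.trans (mul_le_mul_left hΨζ _)
          · exact hI3b.trans (mul_le_mul_left hΨζ _)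
      _ = (c₂ * c₁ * (ENNReal.ofReal (ε ^ 2) * ENNReal.ofReal ε)) * (Wδ * M) +
          (c₂ * c₁ * (ENNReal.ofReal (ε ^ 2 / δ ^ 2) * ENNReal.ofReal ε)) *
            (2 * (NΦ * ζ₂)) := by ring
      _ = X := by rw [hcoef1, hcoef2, one_mul, hX]
  -- numeric bound on X
  have hXlt : X < ENNReal.ofReal η := by
    have hmt : (0:ℝ) ≤ M.toReal := ENNReal.toReal_nonneg
    have hnt : (0:ℝ) ≤ NΦ.toReal := ENNReal.toReal_nonneg
    have hMeq : M = ENNReal.ofReal M.toReal := (ENNReal.ofReal_toReal hMfin).symm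
    have hNeq : NΦ = ENNReal.ofReal NΦ.toReal := (ENNReal.ofReal_toReal hNfin).symm
    have hterm1 : Wδ * M ≤ ENNReal.ofReal (η / (2 * (M.toReal + 1)) * M.toReal) := by
      calc Wδ * M ≤ ζ₁ * M := mul_le_mul_left hWδ.le _
        _ = ENNReal.ofReal (η / (2 * (M.toReal + 1)) * M.toReal) := by
            rw [ENNReal.ofReal_mul (by positivity), ← hMeq, ← hζ₁]
    have h2' : (2:ℝ≥0∞) * (NΦ * ζ₂) =
        ENNReal.ofReal (2 * (NΦ.toReal * (η * δ ^ 2 / (4 * (NΦ.toReal + 1))))) := by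
      rw [ENNReal.ofReal_mul (by norm_num : (0:ℝ) ≤ 2), ENNReal.ofReal_mul hnt,
        ← hNeq, ← hζ₂]
      norm_num
    have hterm2 : ENNReal.ofReal ((δ ^ 2)⁻¹) * (2 * (NΦ * ζ₂)) =
        ENNReal.ofReal ((δ ^ 2)⁻¹ * (2 * (NΦ.toReal * (η * δ ^ 2 / (4 * (NΦ.toReal + 1)))))) := by
      rw [h2', ← ENNReal.ofReal_mul (by positivity)]
    have hA1 : η / (2 * (M.toReal + 1)) * M.toReal < η / 2 := by
      rw [div_mul_eq_mul_div, div_lt_div_iff₀ (by positivity) (by norm_num : (0:ℝ) < 2)]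
      nlinarith
    have hA2 : (δ ^ 2)⁻¹ * (2 * (NΦ.toReal * (η * δ ^ 2 / (4 * (NΦ.toReal + 1))))) < η / 2 := by
      have heq : (δ ^ 2)⁻¹ * (2 * (NΦ.toReal * (η * δ ^ 2 / (4 * (NΦ.toReal + 1))))) =
          η * NΦ.toReal / (2 * (NΦ.toReal + 1)) := by
        field_simp
        ring
      rw [heq, div_lt_div_iff₀ (by positivity) (by norm_num : (0:ℝ) < 2)]
      nlinarith
    calc X ≤ ENNReal.ofReal (η / (2 * (M.toReal + 1)) * M.toReal) +
          ENNReal.ofReal ((δ ^ 2)⁻¹ * (2 * (NΦ.toReal * (η * δ ^ 2 / (4 * (NΦ.toReal + 1)))))) := by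
          rw [hX]
          exact add_le_add hterm1 (le_of_eq hterm2)
      _ = ENNReal.ofReal (η / (2 * (M.toReal + 1)) * M.toReal +
          (δ ^ 2)⁻¹ * (2 * (NΦ.toReal * (η * δ ^ 2 / (4 * (NΦ.toReal + 1)))))) :=
          (ENNReal.ofReal_add (by positivity) (by positivity)).symm
      _ < ENNReal.ofReal η := by
          rw [ENNReal.ofReal_lt_ofReal_iff hη]
          linarith
  have hLfin : L ≠ ∞ := by
    intro hLtop
    have hc₂ne : c₂ ≠ 0 := by
      rw [hc₂]
      simp only [ne_eq, ENNReal.ofReal_eq_zero, not_le]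
      positivity
    rw [hLtop, ENNReal.mul_top hc₂ne] at hmaster
    exact absurd (lt_of_le_of_lt hmaster hXlt) (not_lt.mpr le_top)
  -- pass from the Bochner integral to the lintegral
  have hFle : ε⁻¹ ^ 2 * (∫ x in S₁, ∫ y in S₂, f x y) ≤ (c₂ * L).toReal := by
    have h1 : ∫ x in S₁, ∫ y in S₂, f x y ≤ L.toReal := by
      calc ∫ x in S₁, ∫ y in S₂, f x y
          ≤ (∫⁻ x in S₁, ENNReal.ofReal (∫ y in S₂, f x y)).toReal :=
            Stmt15Aux.integral_le_toReal
              (Eventually.of_forall fun x => integral_nonneg fun y => hfnn x y)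
        _ ≤ L.toReal := by
            apply ENNReal.toReal_mono hLfin
            rw [hLdef]
            apply lintegral_mono
            intro x
            exact Stmt15Aux.ofReal_integral_le (Eventually.of_forall fun y => hfnn x y)
    calc ε⁻¹ ^ 2 * (∫ x in S₁, ∫ y in S₂, f x y) ≤ ε⁻¹ ^ 2 * L.toReal :=
          mul_le_mul_of_nonneg_left h1 (sq_nonneg _)
      _ = (c₂ * L).toReal := by
          rw [ENNReal.toReal_mul, hc₂, ENNReal.toReal_ofReal (sq_nonneg _)]
  have hFnn : 0 ≤ ε⁻¹ ^ 2 * (∫ x in S₁, ∫ y in S₂, f x y) :=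
    mul_nonneg (sq_nonneg _) (integral_nonneg fun x => integral_nonneg fun y => hfnn x y)
  show dist (ε⁻¹ ^ 2 * ∫ x in S₁, ∫ y in S₂, f x y) 0 < η
  rw [Real.dist_eq, sub_zero, abs_of_nonneg hFnn]
  calc ε⁻¹ ^ 2 * (∫ x in S₁, ∫ y in S₂, f x y) ≤ (c₂ * L).toReal := hFle
    _ < η := ENNReal.toReal_lt_of_lt_ofReal (lt_of_le_of_lt hmaster hXlt)
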